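/- Let $U_N$ be uniformly distributed on $\{2,\dots,N\}$, and conditionally on $U_N=j$ let $B$ be Beta distributed with parameters $(1,j)$. Then as $N\to\infty$, $N\cdot B$ converges in distribution to the law on $(0,\infty)$ with density $\frac{1-(1+t)e^{-t}}{t^2}$. -/

import Mathlib

open MeasureTheory Filter

section Aux
open Set

lemma aux_sum (y : ℝ) : ∀ N : ℕ, 2 ≤ N →
    (∑ j ∈ Finset.Icc 2 N, (j:ℝ) * y^(j-1)) * (1-y)^2
      = 1 - ((N:ℝ)+1)*y^N + (N:ℝ)*y^(N+1) - (1-y)^2 := by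
  refine Nat.le_induction ?_ ?_
  · simp [Finset.Icc_self, Finset.sum_singleton]
    push_cast
    ring
  · intro n hn ih
    rw [Finset.sum_Icc_succ_top (by omega : 2 ≤ n+1)]
    have h1 : n + 1 - 1 = n := by omega
    rw [h1]
    push_cast
    linear_combination ih

lemma aux_m (N : ℕ) (hN : 2 ≤ N) (t : ℝ) (ht : 0 < t) (htN : t < N) :
    (1/((N:ℝ)*((N:ℝ)-1))) * ∑ j ∈ Finset.Icc 2 N, (j:ℝ)*(1-t/(N:ℝ))^(j-1)
      = ((N:ℝ)/((N:ℝ)-1)) * ((1 - (1+t)*(1-t/(N:ℝ))^N)/t^2) - ((N:ℝ)*((N:ℝ)-1))⁻¹ := by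
  have hN0 : (N:ℝ) ≠ 0 := by positivity
  have hN1 : (N:ℝ) - 1 ≠ 0 := by
    have : (2:ℝ) ≤ N := by exact_mod_cast hN
    nlinarith
  have ht0 : t ≠ 0 := ne_of_gt ht
  set y : ℝ := 1 - t/(N:ℝ) with hy
  have h1y : 1 - y ≠ 0 := by
    rw [hy]; simp only [sub_sub_cancel]
    positivity
  have h := aux_sum y N hN
  have hS : (∑ j ∈ Finset.Icc 2 N, (j:ℝ)*y^(j-1))
      = (1 - ((N:ℝ)+1)*y^N + (N:ℝ)*y^(N+1) - (1-y)^2) / (1-y)^2 := by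
    rw [eq_div_iff (pow_ne_zero 2 h1y)]; exact h
  rw [hS]
  have hty : t = (N:ℝ)*(1-y) := by rw [hy]; field_simp; ring
  rw [hty]
  field_simp
  ring

lemma rewrite_step (f : ℝ → ℝ) (hf : Continuous f) (N : ℕ) (hN : 2 ≤ N) :
    (1 / ((N : ℝ) - 1)) * ∑ j ∈ Finset.Icc 2 N,
        ∫ x in Set.Ioo (0:ℝ) 1, f (N * x) * ((j : ℝ) * (1 - x) ^ (j - 1))
      = ∫ t in Set.Ioi (0:ℝ), (Set.Ioo (0:ℝ) (N:ℝ)).indicator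
          (fun t => f t * ((1/((N:ℝ)*((N:ℝ)-1))) *
            ∑ j ∈ Finset.Icc 2 N, (j:ℝ)*(1-t/(N:ℝ))^(j-1))) t := by
  have hN0 : (0:ℝ) < N := by
    have : 0 < N := by omega
    exact_mod_cast this
  have hNne : (N:ℝ) ≠ 0 := ne_of_gt hN0
  have hcont : ∀ j : ℕ, Continuous (fun u : ℝ => f u * ((j:ℝ)*(1-u/(N:ℝ))^(j-1))) := by
    intro j
    exact hf.mul (continuous_const.mul
      ((continuous_const.sub (continuous_id.div_const _)).pow _))
  have step1 : ∀ j ∈ Finset.Icc 2 N,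
      (∫ x in Set.Ioo (0:ℝ) 1, f (N * x) * ((j : ℝ) * (1 - x) ^ (j - 1)))
        = (N:ℝ)⁻¹ * ∫ u in Set.Ioo (0:ℝ) (N:ℝ), f u * ((j:ℝ)*(1-u/(N:ℝ))^(j-1)) := by
    intro j _
    set φ : ℝ → ℝ := fun u => f u * ((j:ℝ)*(1-u/(N:ℝ))^(j-1)) with hφ
    have hcomp : ∀ x : ℝ, f ((N:ℝ) * x) * ((j : ℝ) * (1 - x) ^ (j - 1)) = φ ((N:ℝ)*x) := by
      intro x
      rw [hφ]
      simp only
      field_simp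
    calc (∫ x in Set.Ioo (0:ℝ) 1, f (N * x) * ((j : ℝ) * (1 - x) ^ (j - 1)))
        = ∫ x in Set.Ioo (0:ℝ) 1, φ ((N:ℝ)*x) := by
          exact setIntegral_congr_fun measurableSet_Ioo (fun x _ => hcomp x)
      _ = ∫ x in (0:ℝ)..1, φ ((N:ℝ)*x) := by
          rw [intervalIntegral.integral_of_le zero_le_one, integral_Ioc_eq_integral_Ioo]
      _ = (N:ℝ)⁻¹ * ∫ u in (0:ℝ)..(N:ℝ), φ u := by
          have hh := intervalIntegral.smul_integral_comp_mul_left (a := 0) (b := 1) φ (N:ℝ)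
          rw [mul_zero, mul_one, smul_eq_mul] at hh
          rw [← hh, ← mul_assoc, inv_mul_cancel₀ hNne, one_mul]
      _ = (N:ℝ)⁻¹ * ∫ u in Set.Ioo (0:ℝ) (N:ℝ), φ u := by
          rw [intervalIntegral.integral_of_le (le_of_lt hN0), integral_Ioc_eq_integral_Ioo]
  rw [Finset.sum_congr rfl step1, ← Finset.mul_sum]
  have hint : ∀ j ∈ Finset.Icc 2 N,
      IntegrableOn (fun u : ℝ => f u * ((j:ℝ)*(1-u/(N:ℝ))^(j-1))) (Set.Ioo (0:ℝ) (N:ℝ)) := by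
    intro j _
    exact ((hcont j).integrableOn_Icc).mono_set Set.Ioo_subset_Icc_self
  rw [← MeasureTheory.integral_finset_sum _ hint]
  rw [setIntegral_indicator measurableSet_Ioo,
    Set.inter_eq_self_of_subset_right Set.Ioo_subset_Ioi_self]
  have hfun : (fun u : ℝ => f u * ((1/((N:ℝ)*((N:ℝ)-1))) *
      ∑ j ∈ Finset.Icc 2 N, (j:ℝ)*(1-u/(N:ℝ))^(j-1)))
      = (fun u : ℝ => (1/((N:ℝ)*((N:ℝ)-1))) *
          ∑ j ∈ Finset.Icc 2 N, f u * ((j:ℝ)*(1-u/(N:ℝ))^(j-1))) := by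
    funext u
    rw [← Finset.mul_sum]
    ring
  rw [hfun, MeasureTheory.integral_const_mul, ← mul_assoc]
  have hN1ne : (N:ℝ) - 1 ≠ 0 := by
    have h2 : (2:ℝ) ≤ N := by exact_mod_cast hN
    nlinarith
  congr 1
  field_simp

end Aux

open Set in
/-- Let `U_N` be uniform on `{2, …, N}` and, conditionally on `U_N = j`, let `B` be
Beta distributed with parameters `(1, j)` (density `j(1-x)^{j-1}` on `[0,1]`). Then
`N·B` converges in distribution, as `N → ∞`, to the law on `(0,∞)` with density
`(1 - (1+t)e^{-t})/t²`: for every bounded continuous `f`,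
`E(f(N B)) = (1/(N-1)) ∑_{j=2}^N ∫_0^1 f(Nx) j (1-x)^{j-1} dx
  → ∫_0^∞ f(t) (1 - (1+t)e^{-t})/t² dt`. -/
theorem mixture_beta_tendsto
    (f : ℝ → ℝ) (hf : Continuous f) (hbdd : ∃ C, ∀ x, |f x| ≤ C) :
    Tendsto (fun N : ℕ =>
        (1 / ((N : ℝ) - 1)) * ∑ j ∈ Finset.Icc 2 N,
          ∫ x in Set.Ioo (0:ℝ) 1, f (N * x) * ((j : ℝ) * (1 - x) ^ (j - 1)))
      atTop
      (nhds (∫ t in Set.Ioi (0:ℝ), f t * ((1 - (1 + t) * Real.exp (-t)) / t ^ 2))) := by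
  obtain ⟨C0, hC0⟩ := hbdd
  set C : ℝ := max C0 0 with hCdef
  have hC : ∀ x, |f x| ≤ C := fun x => le_trans (hC0 x) (le_max_left _ _)
  have hCnn : 0 ≤ C := le_max_right _ _
  set μ : Measure ℝ := volume.restrict (Set.Ioi 0) with hμ
  set F : ℕ → ℝ → ℝ := fun N t => (Set.Ioo (0:ℝ) (N:ℝ)).indicator
      (fun t => f t * ((1/((N:ℝ)*((N:ℝ)-1))) *
        ∑ j ∈ Finset.Icc 2 N, (j:ℝ)*(1-t/(N:ℝ))^(j-1))) t with hF
  set bound : ℝ → ℝ := fun t => C * (Set.Ioc (0:ℝ) 1).indicator (fun _ => (1:ℝ)) t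
      + (2*C) * (Set.Ioi (1:ℝ)).indicator (fun t => (t^2)⁻¹) t with hbound_def
  have hbound_nn : ∀ t, 0 ≤ bound t := by
    intro t
    have h1 : 0 ≤ (Set.Ioc (0:ℝ) 1).indicator (fun _ => (1:ℝ)) t :=
      Set.indicator_nonneg (fun _ _ => zero_le_one) t
    have h2 : 0 ≤ (Set.Ioi (1:ℝ)).indicator (fun t => (t^2)⁻¹) t :=
      Set.indicator_nonneg (fun x _ => by positivity) t
    have := mul_nonneg hCnn h1
    have := mul_nonneg (by linarith : (0:ℝ) ≤ 2*C) h2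
    simp only [hbound_def]
    linarith
  -- measurability
  have hmeas : ∀ N : ℕ, AEStronglyMeasurable (F N) μ := by
    intro N
    have : Continuous (fun t : ℝ => f t * ((1/((N:ℝ)*((N:ℝ)-1))) *
        ∑ j ∈ Finset.Icc 2 N, (j:ℝ)*(1-t/(N:ℝ))^(j-1))) :=
      hf.mul (continuous_const.mul (continuous_finset_sum _ fun j _ =>
        continuous_const.mul ((continuous_const.sub (continuous_id.div_const _)).pow _)))
    exact (this.aestronglyMeasurable).indicator measurableSet_Ioo
  -- integrability of the bound
  have hbint : Integrable bound μ := by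
    have i1 : Integrable ((Set.Ioc (0:ℝ) 1).indicator (fun _ => (1:ℝ))) μ := by
      rw [integrable_indicator_iff measurableSet_Ioc]
      refine (integrableOn_const_iff (C := (1:ℝ))).mpr (Or.inr ?_)
      exact lt_of_le_of_lt (Measure.restrict_apply_le _ _)
        (by rw [Real.volume_Ioc]; exact ENNReal.ofReal_lt_top)
    have i2 : Integrable ((Set.Ioi (1:ℝ)).indicator (fun t => (t^2)⁻¹)) μ := by
      rw [integrable_indicator_iff measurableSet_Ioi]
      have hres : μ.restrict (Set.Ioi 1) = volume.restrict (Set.Ioi 1) := by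
        rw [hμ, Measure.restrict_restrict measurableSet_Ioi,
          Set.inter_eq_self_of_subset_left (Set.Ioi_subset_Ioi zero_le_one)]
      unfold IntegrableOn
      rw [hres]
      have h0 : IntegrableOn (fun t : ℝ => t ^ (-2:ℝ)) (Set.Ioi 1) volume :=
        integrableOn_Ioi_rpow_of_lt (by norm_num) one_pos
      refine h0.congr_fun (fun t ht => ?_) measurableSet_Ioi
      have ht1 : (1:ℝ) < t := ht
      show t ^ (-2:ℝ) = (t^2)⁻¹
      rw [Real.rpow_neg (by linarith), show ((2:ℝ)) = ((2:ℕ):ℝ) by norm_num,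
        Real.rpow_natCast]
    exact (i1.const_mul C).add (i2.const_mul (2*C))
  -- the uniform bound
  have hb : ∀ N : ℕ, ∀ᵐ t ∂μ, ‖F N t‖ ≤ bound t := by
    intro N
    rw [hμ, ae_restrict_iff' measurableSet_Ioi]
    refine ae_of_all _ (fun t ht => ?_)
    have ht0 : (0:ℝ) < t := ht
    by_cases hmem : t ∈ Set.Ioo (0:ℝ) (N:ℝ)
    · by_cases hN2 : 2 ≤ N
      · have htN : t < (N:ℝ) := hmem.2
        have hN0 : (0:ℝ) < N := lt_trans ht0 htN
        have hN2' : (2:ℝ) ≤ N := by exact_mod_cast hN2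
        have hNN : (0:ℝ) < (N:ℝ)*((N:ℝ)-1) := mul_pos hN0 (by linarith)
        have hy0 : (0:ℝ) ≤ 1 - t/(N:ℝ) := by
          have : t/(N:ℝ) ≤ 1 := (div_le_one hN0).mpr htN.le
          linarith
        have hy1 : 1 - t/(N:ℝ) ≤ 1 := by
          have : 0 ≤ t/(N:ℝ) := by positivity
          linarith
        set S : ℝ := ∑ j ∈ Finset.Icc 2 N, (j:ℝ)*(1-t/(N:ℝ))^(j-1) with hSdef
        have hS0 : 0 ≤ S :=
          Finset.sum_nonneg fun j _ => mul_nonneg (by positivity) (pow_nonneg hy0 _)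
        set m : ℝ := (1/((N:ℝ)*((N:ℝ)-1))) * S with hmdef
        have hm0 : 0 ≤ m := mul_nonneg (by positivity) hS0
        have hFt : ‖F N t‖ = |f t| * m := by
          rw [hF]
          simp only [Set.indicator_of_mem hmem]
          rw [Real.norm_eq_abs, abs_mul, abs_of_nonneg hm0]
        rw [hFt]
        by_cases ht1 : t ≤ 1
        · -- small t : use the crude bound m ≤ 1
          have hS1 : S ≤ (N:ℝ)*((N:ℝ)-1) := by
            have : S ≤ ∑ _j ∈ Finset.Icc 2 N, (N:ℝ) := by
              refine Finset.sum_le_sum fun j hj => ?_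
              have hjN : (j:ℝ) ≤ N := by exact_mod_cast (Finset.mem_Icc.mp hj).2
              calc (j:ℝ)*(1-t/(N:ℝ))^(j-1) ≤ (N:ℝ)*1 :=
                    mul_le_mul hjN (pow_le_one₀ hy0 hy1) (pow_nonneg hy0 _) (by positivity)
                _ = (N:ℝ) := mul_one _
            rw [Finset.sum_const, Nat.card_Icc, nsmul_eq_mul] at this
            have hcard : ((N + 1 - 2 : ℕ) : ℝ) = (N:ℝ) - 1 := by
              have : (N + 1 - 2 : ℕ) = N - 1 := by omega
              rw [this, Nat.cast_sub (by omega)]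
              norm_num
            rw [hcard] at this
            linarith
          have hm1 : m ≤ 1 := by
            rw [hmdef]
            calc (1/((N:ℝ)*((N:ℝ)-1))) * S ≤ (1/((N:ℝ)*((N:ℝ)-1))) * ((N:ℝ)*((N:ℝ)-1)) :=
                  mul_le_mul_of_nonneg_left hS1 (by positivity)
              _ = 1 := by field_simp; exact div_self (by linarith : (0:ℝ) < (N:ℝ) - 1).ne'
          have hind1 : (Set.Ioc (0:ℝ) 1).indicator (fun _ => (1:ℝ)) t = 1 :=
            Set.indicator_of_mem (Set.mem_Ioc.mpr ⟨ht0, ht1⟩) _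
          have hind2 : 0 ≤ (Set.Ioi (1:ℝ)).indicator (fun t => (t^2)⁻¹) t :=
            Set.indicator_nonneg (fun x _ => by positivity) t
          have : |f t| * m ≤ C * 1 := mul_le_mul (hC t) hm1 hm0 hCnn
          rw [hbound_def]
          simp only [hind1]
          nlinarith
        · -- large t : use m ≤ 2/t²
          push_neg at ht1
          have hS2 : S * (t/(N:ℝ))^2 ≤ 1 := by
            have h := aux_sum (1 - t/(N:ℝ)) N hN2
            have e : (1 : ℝ) - (1 - t/(N:ℝ)) = t/(N:ℝ) := by ring
            rw [e] at h
            rw [← hSdef] at h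
            rw [h]
            have hyN : (0:ℝ) ≤ (1-t/(N:ℝ))^N := pow_nonneg hy0 _
            have hps : (1-t/(N:ℝ))^(N+1) = (1-t/(N:ℝ))^N * (1-t/(N:ℝ)) := pow_succ _ _
            rw [hps]
            nlinarith [sq_nonneg (t/(N:ℝ)), mul_nonneg (le_of_lt hN0) hyN]
          have hmt : m * t^2 ≤ 2 := by
            have hSt : S * t^2 ≤ (N:ℝ)^2 := by
              have h' := hS2
              rw [div_pow, mul_div_assoc'] at h'
              exact (div_le_one (by positivity)).mp h'
            have : m * t^2 = (S * t^2)/((N:ℝ)*((N:ℝ)-1)) := by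
              rw [hmdef]; ring
            rw [this]
            rw [div_le_iff₀ hNN]
            nlinarith
          have hm2 : m ≤ 2 * (t^2)⁻¹ := by
            rw [← div_eq_mul_inv]
            exact (le_div_iff₀ (by positivity)).mpr hmt
          have hind1 : (Set.Ioc (0:ℝ) 1).indicator (fun _ => (1:ℝ)) t = 0 :=
            Set.indicator_of_notMem (fun h => absurd h.2 (not_le.mpr ht1)) _
          have hind2 : (Set.Ioi (1:ℝ)).indicator (fun t => (t^2)⁻¹) t = (t^2)⁻¹ :=
            Set.indicator_of_mem ht1 _
          have h1 : |f t| * m ≤ C * (2 * (t^2)⁻¹) := mul_le_mul (hC t) hm2 hm0 hCnn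
          rw [hbound_def]
          simp only [hind1, hind2]
          nlinarith
      · -- N < 2 : the sum is empty
        have : Finset.Icc 2 N = ∅ := Finset.Icc_eq_empty (by omega)
        have hz : F N t = 0 := by
          rw [hF]
          simp only [Set.indicator_of_mem hmem, this, Finset.sum_empty, mul_zero]
        rw [hz]
        simpa using hbound_nn t
    · have hz : F N t = 0 := Set.indicator_of_notMem hmem _
      rw [hz]
      simpa using hbound_nn t
  -- pointwise convergence
  have hlim : ∀ᵐ t ∂μ, Tendsto (fun N => F N t) atTop
      (nhds (f t * ((1 - (1 + t) * Real.exp (-t)) / t ^ 2))) := by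
    rw [hμ, ae_restrict_iff' measurableSet_Ioi]
    refine ae_of_all _ (fun t ht => ?_)
    have ht0 : (0:ℝ) < t := ht
    have hsub : Tendsto (fun N : ℕ => (N:ℝ) - 1) atTop atTop := by
      have := tendsto_atTop_add_const_right atTop (-1 : ℝ) tendsto_natCast_atTop_atTop
      simpa [sub_eq_add_neg] using this
    have hA : Tendsto (fun N : ℕ => (N:ℝ)/((N:ℝ)-1)) atTop (nhds 1) := by
      have h0 : Tendsto (fun N : ℕ => 1 + ((N:ℝ)-1)⁻¹) atTop (nhds (1+0)) :=
        tendsto_const_nhds.add hsub.inv_tendsto_atTop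
      rw [add_zero] at h0
      refine h0.congr' ?_
      filter_upwards [eventually_ge_atTop 2] with N hN2
      have hN1 : (N:ℝ) - 1 ≠ 0 := by
        have : (2:ℝ) ≤ N := by exact_mod_cast hN2
        nlinarith
      field_simp
      ring
    have hB : Tendsto (fun N : ℕ => ((N:ℝ)*((N:ℝ)-1))⁻¹) atTop (nhds 0) :=
      (tendsto_natCast_atTop_atTop.atTop_mul_atTop₀ hsub).inv_tendsto_atTop
    have hCt : Tendsto (fun N : ℕ => (1 - t/(N:ℝ))^N) atTop (nhds (Real.exp (-t))) := by
      have h := Real.tendsto_one_add_div_pow_exp (-t)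
      refine h.congr fun N => ?_
      rw [neg_div, ← sub_eq_add_neg]
    have htend : Tendsto (fun N : ℕ => f t * (((N:ℝ)/((N:ℝ)-1)) *
        ((1 - (1+t)*(1-t/(N:ℝ))^N)/t^2) - ((N:ℝ)*((N:ℝ)-1))⁻¹)) atTop
        (nhds (f t * ((1 - (1 + t) * Real.exp (-t)) / t ^ 2))) := by
      have hmulC : Tendsto (fun N : ℕ => (1+t)*(1-t/(N:ℝ))^N) atTop
          (nhds ((1+t)*Real.exp (-t))) := hCt.const_mul (1+t)
      have hsub2 : Tendsto (fun N : ℕ => 1 - (1+t)*(1-t/(N:ℝ))^N) atTop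
          (nhds (1 - (1+t)*Real.exp (-t))) := tendsto_const_nhds.sub hmulC
      have hdiv : Tendsto (fun N : ℕ => (1 - (1+t)*(1-t/(N:ℝ))^N)/t^2) atTop
          (nhds ((1 - (1+t)*Real.exp (-t))/t^2)) := hsub2.div_const (t^2)
      have hmul1 := (hA.mul hdiv).sub hB
      have hfin := hmul1.const_mul (f t)
      simpa using hfin
    refine htend.congr' ?_
    filter_upwards [eventually_ge_atTop (max 2 (Nat.floor t + 1))] with N hN'
    have hN2 : 2 ≤ N := le_trans (le_max_left _ _) hN'
    have htN : t < (N:ℝ) := by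
      have h1 : Nat.floor t + 1 ≤ N := le_trans (le_max_right _ _) hN'
      have h2 : ((Nat.floor t + 1 : ℕ) : ℝ) ≤ (N:ℝ) := by exact_mod_cast h1
      have h3 : t < ((Nat.floor t : ℕ) : ℝ) + 1 := Nat.lt_floor_add_one t
      push_cast at h2
      linarith
    rw [hF]
    simp only [Set.indicator_of_mem (Set.mem_Ioo.mpr ⟨ht0, htN⟩)]
    rw [aux_m N hN2 t ht0 htN]
  -- conclude by dominated convergence
  have key := MeasureTheory.tendsto_integral_of_dominated_convergence bound hmeas hbint hb hlim
  refine key.congr' ?_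
  filter_upwards [eventually_ge_atTop 2] with N hN2
  exact (rewrite_step f hf N hN2).symm
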